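/- Suppose b and σ satisfy the Lipschitz assumption. Let x* be a periodic solution of the DDE with orbit 𝐎, let 𝐃 be a bounded domain in 𝐂 containing 𝐎, and suppose there exists η₀ > 0 such that 𝐁(𝐃,η₀) is uniformly attracted to 𝐎. Let μ > 0 and η₁ ∈ (0, min(μ, η₀)), and for T > 0 define F_T^{η₁} = { x ∈ C([-τ,T],ℝ^d) : x_t ∈ cl(𝐁(𝐃,η₁)) \ 𝐁(𝐎, μ − η₁) for all t ∈ [0,T] }. Then lim_{T→∞} inf_{φ ∈ 𝐒(𝐎,2μ)} I_T^φ(F_T^{η₁}) = ∞, i.e., for every M > 0 there exists T₀ such that inf_{φ ∈ 𝐒(𝐎,2μ)} inf_{x ∈ F_T^{η₁}} I_T^φ(x) > M for all T ≥ T₀. -/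

import Mathlib

open MeasureTheory Set Metric
open scoped ENNReal

noncomputable section

/-- `ℝ^d`. -/
abbrev Vec (d : ℕ) := EuclideanSpace ℝ (Fin d)

/-- The state space `𝐂 = C([-τ,0],ℝ^d)`. -/
abbrev Hist (τ : ℝ) (d : ℕ) := C(Icc (-τ) (0:ℝ), Vec d)

/-- The path space `C([-τ,T],ℝ^d)`. -/
abbrev Traj (τ T : ℝ) (d : ℕ) := C(Icc (-τ) T, Vec d)

/-- Matrix acting on a vector. -/
def matVec {d m : ℕ} (M : Matrix (Fin d) (Fin m) ℝ) (v : Vec m) : Vec d :=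
  WithLp.toLp 2 (fun i => ∑ j, M i j * v j)

/-- Squared Frobenius norm of a matrix. -/
def frobSq {d m : ℕ} (M : Matrix (Fin d) (Fin m) ℝ) : ℝ := ∑ i, ∑ j, (M i j) ^ 2

/-- Frobenius norm of a matrix. -/
def frobNorm {d m : ℕ} (M : Matrix (Fin d) (Fin m) ℝ) : ℝ := Real.sqrt (frobSq M)

/-- Evaluation of a path at a time `t ∈ [-τ,T]` (clamped). -/
def ev {d : ℕ} {τ T : ℝ} (h : -τ ≤ T) (x : Traj τ T d) (t : ℝ) : Vec d :=
  x (projIcc (-τ) T h t)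

/-- The history segment `x_t ∈ 𝐂` of a path `x ∈ C([-τ,T],ℝ^d)`, for `t ∈ [0,T]`. -/
def seg {d : ℕ} {τ T : ℝ} (h : -τ ≤ T) (x : Traj τ T d) (t : ℝ) : Hist τ d :=
  ⟨fun s => x (projIcc (-τ) T h (t + s.1)),
    x.continuous.comp <| continuous_projIcc.comp <| continuous_const.add continuous_subtype_val⟩

/-- The uniform Lipschitz assumption on the coefficients:
`|b(φ)−b(ψ)|² + |σ(φ)−σ(ψ)|² ≤ κ₁ ‖φ−ψ‖²`. -/
def LipCoeff {d m : ℕ} {τ : ℝ} (b : Hist τ d → Vec d)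
    (σ' : Hist τ d → Matrix (Fin d) (Fin m) ℝ) (κ₁ : ℝ) : Prop :=
  ∀ φ ψ : Hist τ d, ‖b φ - b ψ‖ ^ 2 + frobSq (σ' φ - σ' ψ) ≤ κ₁ * ‖φ - ψ‖ ^ 2

/-- The linear growth bound `|b(φ)|² + |σ(φ)|² ≤ κ₂ (1 + ‖φ‖²)`. -/
def GrowthCoeff {d m : ℕ} {τ : ℝ} (b : Hist τ d → Vec d)
    (σ' : Hist τ d → Matrix (Fin d) (Fin m) ℝ) (κ₂ : ℝ) : Prop :=
  ∀ φ : Hist τ d, ‖b φ‖ ^ 2 + frobSq (σ' φ) ≤ κ₂ * (1 + ‖φ‖ ^ 2)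

/-- The set `U_T(x)` of controls `u ∈ L²([0,T],ℝ^m)` satisfying
`x(t) = x(0) + ∫₀ᵗ b(x_s) ds + ∫₀ᵗ σ(x_s) u(s) ds` for `t ∈ [0,T]`. -/
def controls {d m : ℕ} {τ T : ℝ} (h : -τ ≤ T) (b : Hist τ d → Vec d)
    (σ' : Hist τ d → Matrix (Fin d) (Fin m) ℝ) (x : Traj τ T d) : Set (ℝ → Vec m) :=
  {u | MemLp u 2 (volume.restrict (Icc 0 T)) ∧
    ∀ t ∈ Icc (0:ℝ) T,
      ev h x t = ev h x 0 + (∫ s in (0:ℝ)..t, b (seg h x s)) +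
        ∫ s in (0:ℝ)..t, matVec (σ' (seg h x s)) (u s)}

/-- The rate function `I_T(x) = inf_{u ∈ U_T(x)} ½∫₀ᵀ |u(s)|² ds` (with value `∞` if
`U_T(x) = ∅`). -/
def rate {d m : ℕ} {τ T : ℝ} (h : -τ ≤ T) (b : Hist τ d → Vec d)
    (σ' : Hist τ d → Matrix (Fin d) (Fin m) ℝ) (x : Traj τ T d) : ℝ≥0∞ :=
  ⨅ (u : ℝ → Vec m) (_ : u ∈ controls h b σ' x),
    ENNReal.ofReal ((1/2) * ∫ s in (0:ℝ)..T, ‖u s‖ ^ 2)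

open Classical in
/-- The rate function `I_T^φ(x)`, which is `I_T(x)` if `x₀ = φ` and `∞` otherwise. -/
def rateAt {d m : ℕ} {τ T : ℝ} (h : -τ ≤ T) (b : Hist τ d → Vec d)
    (σ' : Hist τ d → Matrix (Fin d) (Fin m) ℝ) (φ : Hist τ d) (x : Traj τ T d) : ℝ≥0∞ :=
  if seg h x 0 = φ then rate h b σ' x else ⊤

/-- The history segment `x_t ∈ 𝐂` of a function `x ∈ C(ℝ,ℝ^d)` (used for functions on
`[-τ,∞)`, extended continuously to `ℝ`). -/
def segF {d : ℕ} (τ : ℝ) (x : C(ℝ, Vec d)) (t : ℝ) : Hist τ d :=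
  ⟨fun s => x (t + s.1), x.continuous.comp <| continuous_const.add continuous_subtype_val⟩

/-- `x` is a solution of the DDE `x(t) = x(0) + ∫₀ᵗ b(x_s) ds`, `t ≥ 0`. -/
def IsDDESol {d : ℕ} (τ : ℝ) (b : Hist τ d → Vec d) (x : C(ℝ, Vec d)) : Prop :=
  ∀ t : ℝ, 0 ≤ t → x t = x 0 + ∫ s in (0:ℝ)..t, b (segF τ x s)

/-- `x` is a periodic solution of the DDE with period `p`. -/
def IsPeriodicSol {d : ℕ} (τ : ℝ) (b : Hist τ d → Vec d) (x : C(ℝ, Vec d)) (p : ℝ) : Prop :=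
  IsDDESol τ b x ∧ 0 < p ∧ ∀ t : ℝ, -τ ≤ t → x (t + p) = x t

/-- The orbit `𝐎 = {x*_t : t ∈ [0,p)} ⊂ 𝐂` of a periodic solution. -/
def orbit {d : ℕ} (τ : ℝ) (x : C(ℝ, Vec d)) (p : ℝ) : Set (Hist τ d) :=
  (segF τ x) '' Ico 0 p

/-- Uniform ellipticity of `a = σσ'`: `ν' a(φ) ν ≥ c |ν|²`. -/
def UnifElliptic {d : ℕ} {τ : ℝ} (σ' : Hist τ d → Matrix (Fin d) (Fin d) ℝ) (c : ℝ) : Prop :=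
  ∀ (φ : Hist τ d) (ν : Fin d → ℝ),
    c * (∑ i, ν i ^ 2) ≤ dotProduct ν ((σ' φ * Matrix.transpose (σ' φ)).mulVec ν)


section Helpers

lemma frobSq_nonneg' {d m : ℕ} (M : Matrix (Fin d) (Fin m) ℝ) : 0 ≤ frobSq M :=
  Finset.sum_nonneg fun _ _ => Finset.sum_nonneg fun _ _ => sq_nonneg _

lemma continuous_seg {d : ℕ} {τ T : ℝ} (h : -τ ≤ T) (x : Traj τ T d) :
    Continuous (seg h x) := by
  let F : C(ℝ × Icc (-τ) (0:ℝ), Vec d) :=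
    ⟨fun p => x (projIcc (-τ) T h (p.1 + p.2.1)),
      x.continuous.comp <| continuous_projIcc.comp <|
        continuous_fst.add (continuous_subtype_val.comp continuous_snd)⟩
  have heq : seg h x = fun t => F.curry t := by
    funext t; ext s; rfl
  rw [heq]; exact F.curry.continuous

lemma continuous_segF {d : ℕ} (τ : ℝ) (y : C(ℝ, Vec d)) : Continuous (segF τ y) := by
  let F : C(ℝ × Icc (-τ) (0:ℝ), Vec d) :=
    ⟨fun p => y (p.1 + p.2.1),
      y.continuous.comp <| continuous_fst.add (continuous_subtype_val.comp continuous_snd)⟩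
  have heq : segF τ y = fun t => F.curry t := by
    funext t; ext s; rfl
  rw [heq]; exact F.curry.continuous

lemma gronwall_int {N : ℝ → ℝ} {L A T₁ : ℝ} (hN : Continuous N) (hN0 : ∀ t, 0 ≤ N t)
    (hL : 0 < L) (hA : 0 ≤ A) (hT : 0 ≤ T₁)
    (h : ∀ t ∈ Icc (0:ℝ) T₁, N t ≤ L * (∫ s in (0:ℝ)..t, N s) + A) :
    N T₁ ≤ A * Real.exp (L * T₁) := by
  set G : ℝ → ℝ := fun t => ∫ s in (0:ℝ)..t, N s with hG
  have hGd : ∀ t : ℝ, HasDerivAt G (N t) t := by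
    intro t
    exact intervalIntegral.integral_hasDerivAt_right (hN.intervalIntegrable 0 t)
      (hN.stronglyMeasurable.stronglyMeasurableAtFilter) hN.continuousAt
  have hG0 : ∀ t, 0 ≤ t → 0 ≤ G t := fun t ht =>
    intervalIntegral.integral_nonneg ht fun s _ => hN0 s
  have key := norm_le_gronwallBound_of_norm_deriv_right_le (f := G) (f' := N)
    (δ := 0) (K := L) (ε := A) (a := 0) (b := T₁)
    (fun t _ => (hGd t).continuousAt.continuousWithinAt)
    (fun t _ => (hGd t).hasDerivWithinAt)
    (by simp [hG, intervalIntegral.integral_same])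
    (fun t ht => by
      rw [Real.norm_eq_abs, Real.norm_eq_abs, abs_of_nonneg (hN0 t),
        abs_of_nonneg (hG0 t ht.1)]
      exact h t ⟨ht.1, ht.2.le⟩)
  have hGT := key T₁ ⟨hT, le_rfl⟩
  rw [Real.norm_eq_abs, abs_of_nonneg (hG0 T₁ hT)] at hGT
  rw [gronwallBound_of_K_ne_0 hL.ne'] at hGT
  have hb : G T₁ ≤ A / L * (Real.exp (L * (T₁ - 0)) - 1) := by
    simpa using hGT
  have h2 := h T₁ ⟨hT, le_rfl⟩
  have : L * G T₁ ≤ A * (Real.exp (L * T₁) - 1) := by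
    calc L * G T₁ ≤ L * (A / L * (Real.exp (L * (T₁ - 0)) - 1)) := by
          apply mul_le_mul_of_nonneg_left hb hL.le
      _ = A * (Real.exp (L * T₁) - 1) := by
          field_simp
          simp only [sub_zero]
    -- fix shape
  calc N T₁ ≤ L * G T₁ + A := h2
    _ ≤ A * (Real.exp (L * T₁) - 1) + A := by linarith
    _ = A * Real.exp (L * T₁) := by ring

end Helpers

section Lip
variable {d m : ℕ} {τ : ℝ} {b : Hist τ d → Vec d}
  {σ' : Hist τ d → Matrix (Fin d) (Fin m) ℝ} {κ₁ : ℝ}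

lemma sqrt_sum_sq_add {ι : Type*} [Fintype ι] (a b : ι → ℝ) :
    Real.sqrt (∑ i, (a i + b i) ^ 2) ≤
      Real.sqrt (∑ i, a i ^ 2) + Real.sqrt (∑ i, b i ^ 2) := by
  set A := ∑ i, a i ^ 2 with hA
  set B := ∑ i, b i ^ 2 with hB
  have hA0 : 0 ≤ A := Finset.sum_nonneg fun _ _ => sq_nonneg _
  have hB0 : 0 ≤ B := Finset.sum_nonneg fun _ _ => sq_nonneg _
  have hab : ∑ i, a i * b i ≤ Real.sqrt A * Real.sqrt B := by
    have h := Finset.sum_mul_sq_le_sq_mul_sq Finset.univ a b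
    calc ∑ i, a i * b i ≤ |∑ i, a i * b i| := le_abs_self _
      _ = Real.sqrt ((∑ i, a i * b i) ^ 2) := (Real.sqrt_sq_eq_abs _).symm
      _ ≤ Real.sqrt (A * B) := Real.sqrt_le_sqrt h
      _ = Real.sqrt A * Real.sqrt B := Real.sqrt_mul hA0 _
  have key : ∑ i, (a i + b i) ^ 2 ≤ (Real.sqrt A + Real.sqrt B) ^ 2 := by
    have expand : ∑ i, (a i + b i) ^ 2 = A + 2 * (∑ i, a i * b i) + B := by
      rw [hA, hB, Finset.mul_sum, ← Finset.sum_add_distrib, ← Finset.sum_add_distrib]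
      exact Finset.sum_congr rfl fun i _ => by ring
    rw [expand]
    have hsq : (Real.sqrt A + Real.sqrt B) ^ 2
        = A + 2 * (Real.sqrt A * Real.sqrt B) + B := by
      rw [add_sq, Real.sq_sqrt hA0, Real.sq_sqrt hB0]; ring
    rw [hsq]
    linarith [hab]
  calc Real.sqrt (∑ i, (a i + b i) ^ 2) ≤ Real.sqrt ((Real.sqrt A + Real.sqrt B) ^ 2) :=
        Real.sqrt_le_sqrt key
    _ = Real.sqrt A + Real.sqrt B := Real.sqrt_sq (by positivity)

lemma frobSq_eq_prod {d m : ℕ} (M : Matrix (Fin d) (Fin m) ℝ) :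
    frobSq M = ∑ p : Fin d × Fin m, (M p.1 p.2) ^ 2 := by
  rw [frobSq, Fintype.sum_prod_type]

lemma frobNorm_add_le {d m : ℕ} (A B : Matrix (Fin d) (Fin m) ℝ) :
    frobNorm (A + B) ≤ frobNorm A + frobNorm B := by
  rw [frobNorm, frobNorm, frobNorm, frobSq_eq_prod, frobSq_eq_prod, frobSq_eq_prod]
  have := sqrt_sum_sq_add (fun p : Fin d × Fin m => A p.1 p.2)
    (fun p : Fin d × Fin m => B p.1 p.2)
  simpa [Matrix.add_apply] using this

lemma norm_matVec_le {d m : ℕ} (M : Matrix (Fin d) (Fin m) ℝ) (v : Vec m) :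
    ‖matVec M v‖ ≤ frobNorm M * ‖v‖ := by
  have hnv : ‖v‖ = Real.sqrt (∑ j, (v j) ^ 2) := by
    rw [EuclideanSpace.norm_eq]; simp [Real.norm_eq_abs, sq_abs]
  have h1 : ‖matVec M v‖ = Real.sqrt (∑ i, (∑ j, M i j * v j) ^ 2) := by
    rw [EuclideanSpace.norm_eq]; simp [matVec, Real.norm_eq_abs, sq_abs]
  rw [h1, hnv, frobNorm, ← Real.sqrt_mul (frobSq_nonneg' M)]
  apply Real.sqrt_le_sqrt
  calc ∑ i, (∑ j, M i j * v j) ^ 2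
      ≤ ∑ i, (∑ j, (M i j) ^ 2) * (∑ j, (v j) ^ 2) :=
        Finset.sum_le_sum fun i _ => Finset.sum_mul_sq_le_sq_mul_sq _ _ _
    _ = frobSq M * ∑ j, (v j) ^ 2 := by rw [frobSq, Finset.sum_mul]

lemma b_lip (hκ₁ : 0 < κ₁) (hlip : LipCoeff b σ' κ₁) (φ ψ : Hist τ d) :
    ‖b φ - b ψ‖ ≤ Real.sqrt κ₁ * ‖φ - ψ‖ := by
  have h1 : ‖b φ - b ψ‖ ^ 2 ≤ κ₁ * ‖φ - ψ‖ ^ 2 :=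
    le_trans (le_add_of_nonneg_right (frobSq_nonneg' _)) (hlip φ ψ)
  calc ‖b φ - b ψ‖ = Real.sqrt (‖b φ - b ψ‖ ^ 2) := (Real.sqrt_sq (norm_nonneg _)).symm
    _ ≤ Real.sqrt (κ₁ * ‖φ - ψ‖ ^ 2) := Real.sqrt_le_sqrt h1
    _ = Real.sqrt κ₁ * ‖φ - ψ‖ := by
        rw [Real.sqrt_mul hκ₁.le, Real.sqrt_sq (norm_nonneg _)]

lemma sig_lip (hκ₁ : 0 < κ₁) (hlip : LipCoeff b σ' κ₁) (φ ψ : Hist τ d) :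
    frobNorm (σ' φ - σ' ψ) ≤ Real.sqrt κ₁ * ‖φ - ψ‖ := by
  have h1 : frobSq (σ' φ - σ' ψ) ≤ κ₁ * ‖φ - ψ‖ ^ 2 :=
    le_trans (le_add_of_nonneg_left (sq_nonneg _)) (hlip φ ψ)
  calc frobNorm (σ' φ - σ' ψ) ≤ Real.sqrt (κ₁ * ‖φ - ψ‖ ^ 2) := Real.sqrt_le_sqrt h1
    _ = Real.sqrt κ₁ * ‖φ - ψ‖ := by
        rw [Real.sqrt_mul hκ₁.le, Real.sqrt_sq (norm_nonneg _)]

lemma sig_bound (hκ₁ : 0 < κ₁) (hlip : LipCoeff b σ' κ₁) (φ ψ : Hist τ d) :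
    frobNorm (σ' φ) ≤ frobNorm (σ' ψ) + Real.sqrt κ₁ * ‖φ - ψ‖ := by
  calc frobNorm (σ' φ) = frobNorm ((σ' φ - σ' ψ) + σ' ψ) := by rw [sub_add_cancel]
    _ ≤ frobNorm (σ' φ - σ' ψ) + frobNorm (σ' ψ) := frobNorm_add_le _ _
    _ ≤ Real.sqrt κ₁ * ‖φ - ψ‖ + frobNorm (σ' ψ) := by
        have := sig_lip hκ₁ hlip φ ψ; linarith
    _ = frobNorm (σ' ψ) + Real.sqrt κ₁ * ‖φ - ψ‖ := by ring

lemma continuous_b (hκ₁ : 0 < κ₁) (hlip : LipCoeff b σ' κ₁) : Continuous b := by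
  refine (LipschitzWith.of_dist_le_mul (K := Real.toNNReal (Real.sqrt κ₁)) ?_).continuous
  intro φ ψ
  rw [dist_eq_norm, dist_eq_norm, Real.coe_toNNReal _ (Real.sqrt_nonneg _)]
  exact b_lip hκ₁ hlip φ ψ

lemma abs_entry_le_frobNorm {d m : ℕ} (M : Matrix (Fin d) (Fin m) ℝ) (i : Fin d) (j : Fin m) :
    |M i j| ≤ frobNorm M := by
  rw [← Real.sqrt_sq_eq_abs]
  apply Real.sqrt_le_sqrt
  calc (M i j) ^ 2 ≤ ∑ j', (M i j') ^ 2 :=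
        Finset.single_le_sum (f := fun j' => (M i j') ^ 2)
          (fun j' _ => sq_nonneg _) (Finset.mem_univ j)
    _ ≤ frobSq M :=
        Finset.single_le_sum (f := fun i' => ∑ j', (M i' j') ^ 2)
          (fun i' _ => Finset.sum_nonneg fun _ _ => sq_nonneg _) (Finset.mem_univ i)

lemma continuous_sig (hκ₁ : 0 < κ₁) (hlip : LipCoeff b σ' κ₁) : Continuous σ' := by
  refine continuous_pi fun i => continuous_pi fun j => ?_
  refine (LipschitzWith.of_dist_le_mul (K := Real.toNNReal (Real.sqrt κ₁)) ?_).continuous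
  intro φ ψ
  rw [Real.dist_eq, dist_eq_norm, Real.coe_toNNReal _ (Real.sqrt_nonneg _)]
  have h1 : σ' φ i j - σ' ψ i j = (σ' φ - σ' ψ) i j := by simp [Matrix.sub_apply]
  rw [h1]
  exact le_trans (abs_entry_le_frobNorm _ i j) (sig_lip hκ₁ hlip φ ψ)

lemma continuous_matVec {d m : ℕ} :
    Continuous (fun pr : Matrix (Fin d) (Fin m) ℝ × Vec m => matVec pr.1 pr.2) := by
  have : Continuous (fun pr : Matrix (Fin d) (Fin m) ℝ × Vec m =>
      (fun i => ∑ j, pr.1 i j * pr.2 j : Fin d → ℝ)) := by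
    refine continuous_pi fun i => continuous_finset_sum _ fun j _ => ?_
    exact (((continuous_apply j).comp ((continuous_apply i).comp
      (continuous_fst : Continuous (fun pr : Matrix (Fin d) (Fin m) ℝ × Vec m => pr.1))))).mul
      ((continuous_apply j).comp ((PiLp.continuous_ofLp 2 _).comp continuous_snd))
  exact (PiLp.continuous_toLp 2 _).comp this

end Lip

section Window

lemma window_energy {d m : ℕ} {τ : ℝ} (hτ : 0 < τ)
    {b : Hist τ d → Vec d} {σ' : Hist τ d → Matrix (Fin d) (Fin m) ℝ}
    {κ₁ : ℝ} (hκ₁ : 0 < κ₁) (hlip : LipCoeff b σ' κ₁)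
    {T : ℝ} (hT : -τ ≤ T) (x : Traj τ T d) (u : ℝ → Vec m)
    (hu : u ∈ controls hT b σ' x)
    {y : C(ℝ, Vec d)} (hydde : IsDDESol τ b y)
    {t₀ T₁ : ℝ} (ht₀ : 0 ≤ t₀) (hT₁ : 0 ≤ T₁) (hwin : t₀ + T₁ ≤ T)
    (hy0 : segF τ y 0 = seg hT x t₀)
    {K : ℝ} (hK : 0 < K)
    (hσK : ∀ s ∈ Icc (0:ℝ) T, frobNorm (σ' (seg hT x s)) ≤ K) :
    dist (seg hT x (t₀ + T₁)) (segF τ y T₁) ≤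
      (K * ∫ s in t₀..(t₀ + T₁), ‖u s‖) * Real.exp (Real.sqrt κ₁ * T₁) := by
  set L := Real.sqrt κ₁ with hLdef
  have hLpos : 0 < L := Real.sqrt_pos.2 hκ₁
  obtain ⟨huL2, heq⟩ := hu
  have hum : AEStronglyMeasurable u (volume.restrict (Icc 0 T)) := huL2.1
  haveI hfin : IsFiniteMeasure (volume.restrict (Icc (0:ℝ) T)) :=
    ⟨by rw [Measure.restrict_apply_univ]; exact measure_Icc_lt_top⟩
  have huInt : IntegrableOn (fun s => ‖u s‖) (Icc 0 T) volume := by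
    have h1 : MemLp u 1 (volume.restrict (Icc (0:ℝ) T)) :=
      huL2.mono_exponent (by norm_num)
    exact (memLp_one_iff_integrable.1 h1).norm
  have hbx : Continuous fun s => b (seg hT x s) :=
    (continuous_b hκ₁ hlip).comp (continuous_seg hT x)
  have hby : Continuous fun s => b (segF τ y s) :=
    (continuous_b hκ₁ hlip).comp (continuous_segF τ y)
  have hsigm : AEStronglyMeasurable (fun s => matVec (σ' (seg hT x s)) (u s))
      (volume.restrict (Icc 0 T)) := by
    have hcM : Continuous fun s => σ' (seg hT x s) :=
      (continuous_sig hκ₁ hlip).comp (continuous_seg hT x)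
    have hc : Continuous (fun s => (fun i j => σ' (seg hT x s) i j : Fin d → Fin m → ℝ)) :=
      continuous_pi fun i => continuous_pi fun j =>
        (continuous_apply j).comp ((continuous_apply i).comp hcM)
    have hpair : AEStronglyMeasurable
        (fun s => ((fun i j => σ' (seg hT x s) i j : Fin d → Fin m → ℝ), u s))
        (volume.restrict (Icc 0 T)) :=
      hc.aestronglyMeasurable.prodMk hum
    have hcm : Continuous (fun pr : (Fin d → Fin m → ℝ) × Vec m => matVec pr.1 pr.2) :=
      continuous_matVec
    exact hcm.comp_aestronglyMeasurable hpair
  have hsigInt : IntegrableOn (fun s => matVec (σ' (seg hT x s)) (u s)) (Icc 0 T) volume := by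
    refine Integrable.mono' (huInt.const_mul K) hsigm ?_
    filter_upwards [ae_restrict_mem measurableSet_Icc] with s hs
    calc ‖matVec (σ' (seg hT x s)) (u s)‖
        ≤ frobNorm (σ' (seg hT x s)) * ‖u s‖ := norm_matVec_le _ _
      _ ≤ K * ‖u s‖ := mul_le_mul_of_nonneg_right (hσK s hs) (norm_nonneg _)
  have hsigII : ∀ a c : ℝ, 0 ≤ a → a ≤ c → c ≤ T →
      IntervalIntegrable (fun s => matVec (σ' (seg hT x s)) (u s)) volume a c := by
    intro a c ha hac hcT
    refine (hsigInt.mono_set ?_).intervalIntegrable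
    rw [Set.uIcc_of_le hac]; exact Icc_subset_Icc ha hcT
  have huII : ∀ a c : ℝ, 0 ≤ a → a ≤ c → c ≤ T →
      IntervalIntegrable (fun s => ‖u s‖) volume a c := by
    intro a c ha hac hcT
    refine (huInt.mono_set ?_).intervalIntegrable
    rw [Set.uIcc_of_le hac]; exact Icc_subset_Icc ha hcT
  have hKuII : ∀ a c : ℝ, 0 ≤ a → a ≤ c → c ≤ T →
      IntervalIntegrable (fun s => K * ‖u s‖) volume a c := fun a c ha hac hcT =>
    (huII a c ha hac hcT).const_mul K
  set A := K * ∫ s in t₀..(t₀ + T₁), ‖u s‖ with hAdef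
  have hIu0 : 0 ≤ ∫ s in t₀..(t₀ + T₁), ‖u s‖ :=
    intervalIntegral.integral_nonneg (by linarith) fun s _ => norm_nonneg _
  have hA0 : 0 ≤ A := mul_nonneg hK.le hIu0
  set N : ℝ → ℝ := fun s => ‖seg hT x (t₀ + s) - segF τ y s‖ with hNdef
  have hNc : Continuous N := by
    have h1 : Continuous fun s : ℝ => seg hT x (t₀ + s) :=
      (continuous_seg hT x).comp (continuous_const.add continuous_id)
    exact (h1.sub (continuous_segF τ y)).norm
  have hN0 : ∀ s, 0 ≤ N s := fun s => norm_nonneg _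
  set w : ℝ → Vec d := fun s => ev hT x (t₀ + s) - y s with hwdef
  have hw_neg : ∀ s : ℝ, -τ ≤ s → s ≤ 0 → w s = 0 := by
    intro s hs1 hs2
    have h2 : segF τ y 0 ⟨s, hs1, hs2⟩ = seg hT x t₀ ⟨s, hs1, hs2⟩ := by rw [hy0]
    have h3 : y s = x (projIcc (-τ) T hT (t₀ + s)) := by
      have : y (0 + s) = x (projIcc (-τ) T hT (t₀ + s)) := h2
      simpa using this
    simp only [hwdef, ev, h3, sub_self]
  have hy00 : ev hT x t₀ = y 0 := by
    have h0 := hw_neg 0 (by linarith) le_rfl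
    simp only [hwdef, add_zero] at h0
    exact sub_eq_zero.1 h0
  have hweq : ∀ t ∈ Icc (0:ℝ) T₁,
      w t = (∫ r in t₀..(t₀ + t), (b (seg hT x r) - b (segF τ y (r - t₀)))) +
        ∫ r in t₀..(t₀ + t), matVec (σ' (seg hT x r)) (u r) := by
    intro t ht
    have e1 := heq (t₀ + t) ⟨by linarith [ht.1], by linarith [ht.2]⟩
    have e2 := heq t₀ ⟨ht₀, by linarith⟩
    have hb1 : IntervalIntegrable (fun r => b (seg hT x r)) volume 0 (t₀ + t) :=
      hbx.intervalIntegrable _ _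
    have hb2 : IntervalIntegrable (fun r => b (seg hT x r)) volume 0 t₀ :=
      hbx.intervalIntegrable _ _
    have hs1 := hsigII 0 (t₀ + t) le_rfl (by linarith [ht.1]) (by linarith [ht.2])
    have hs2 := hsigII 0 t₀ le_rfl ht₀ (by linarith)
    have hxeq : ev hT x (t₀ + t) - ev hT x t₀ =
        (∫ r in t₀..(t₀ + t), b (seg hT x r)) +
          ∫ r in t₀..(t₀ + t), matVec (σ' (seg hT x r)) (u r) := by
      rw [e1, e2, ← intervalIntegral.integral_interval_sub_left hb1 hb2,
        ← intervalIntegral.integral_interval_sub_left hs1 hs2]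
      abel
    have hyeq : y t - y 0 = ∫ r in (0:ℝ)..t, b (segF τ y r) := by
      rw [hydde t ht.1]; abel
    have hsplit : w t = (ev hT x (t₀ + t) - ev hT x t₀) - (y t - y 0) := by
      simp only [hwdef, hy00]; abel
    have hshift : ∫ r in (0:ℝ)..t, b (segF τ y r)
        = ∫ r in t₀..(t₀ + t), b (segF τ y (r - t₀)) := by
      rw [intervalIntegral.integral_comp_sub_right (fun r => b (segF τ y r)) t₀]
      norm_num
    have hbyII : IntervalIntegrable (fun r => b (segF τ y (r - t₀))) volume t₀ (t₀ + t) :=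
      (hby.comp (continuous_id.sub continuous_const)).intervalIntegrable _ _
    have hbxII : IntervalIntegrable (fun r => b (seg hT x r)) volume t₀ (t₀ + t) :=
      hbx.intervalIntegrable _ _
    rw [hsplit, hxeq, hyeq, hshift, intervalIntegral.integral_sub hbxII hbyII]
    abel
  set G : ℝ → ℝ := fun t => ∫ s in (0:ℝ)..t, N s with hGdef
  have hwbound : ∀ t ∈ Icc (0:ℝ) T₁, ‖w t‖ ≤ L * G t + A := by
    intro t ht
    rw [hweq t ht]
    have hc1 : Continuous fun r => ‖b (seg hT x r) - b (segF τ y (r - t₀))‖ :=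
      (hbx.sub (hby.comp (continuous_id.sub continuous_const))).norm
    have hc2 : Continuous fun r => L * N (r - t₀) :=
      continuous_const.mul (hNc.comp (continuous_id.sub continuous_const))
    have h1 : ‖∫ r in t₀..(t₀ + t), (b (seg hT x r) - b (segF τ y (r - t₀)))‖
        ≤ ∫ r in t₀..(t₀ + t), L * N (r - t₀) := by
      refine (intervalIntegral.norm_integral_le_integral_norm (by linarith [ht.1])).trans ?_
      refine intervalIntegral.integral_mono_on (by linarith [ht.1])
        (hc1.intervalIntegrable _ _) (hc2.intervalIntegrable _ _) ?_
      intro r _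
      have hrw : seg hT x r = seg hT x (t₀ + (r - t₀)) := by rw [add_sub_cancel]
      rw [hrw]
      exact b_lip hκ₁ hlip _ _
    have h1' : ∫ r in t₀..(t₀ + t), L * N (r - t₀) = L * G t := by
      rw [intervalIntegral.integral_comp_sub_right (fun r => L * N r) t₀]
      simp only [sub_self, add_sub_cancel_left]
      rw [intervalIntegral.integral_const_mul]
    have h2 : ‖∫ r in t₀..(t₀ + t), matVec (σ' (seg hT x r)) (u r)‖ ≤ A := by
      have h21 : ‖∫ r in t₀..(t₀ + t), matVec (σ' (seg hT x r)) (u r)‖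
          ≤ ∫ r in t₀..(t₀ + t), ‖matVec (σ' (seg hT x r)) (u r)‖ :=
        intervalIntegral.norm_integral_le_integral_norm (by linarith [ht.1])
      have h22 : ∫ r in t₀..(t₀ + t), ‖matVec (σ' (seg hT x r)) (u r)‖
          ≤ ∫ r in t₀..(t₀ + t), K * ‖u r‖ := by
        refine intervalIntegral.integral_mono_on (by linarith [ht.1])
          ((hsigII t₀ (t₀ + t) ht₀ (by linarith [ht.1]) (by linarith [ht.2])).norm)
          (hKuII t₀ (t₀ + t) ht₀ (by linarith [ht.1]) (by linarith [ht.2])) ?_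
        intro r hr
        calc ‖matVec (σ' (seg hT x r)) (u r)‖
            ≤ frobNorm (σ' (seg hT x r)) * ‖u r‖ := norm_matVec_le _ _
          _ ≤ K * ‖u r‖ := mul_le_mul_of_nonneg_right
              (hσK r ⟨by linarith [hr.1, ht.1], by linarith [hr.2, ht.2, hwin]⟩)
              (norm_nonneg _)
      have h23 : ∫ r in t₀..(t₀ + t), K * ‖u r‖ ≤ ∫ r in t₀..(t₀ + T₁), K * ‖u r‖ := by
        refine intervalIntegral.integral_mono_interval le_rfl (by linarith [ht.1])
          (by linarith [ht.2]) ?_ (hKuII t₀ (t₀ + T₁) ht₀ (by linarith) hwin)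
        filter_upwards with s
        positivity
      have h24 : ∫ r in t₀..(t₀ + T₁), K * ‖u r‖ = A := by
        rw [hAdef, intervalIntegral.integral_const_mul]
      linarith
    calc ‖(∫ r in t₀..(t₀ + t), (b (seg hT x r) - b (segF τ y (r - t₀)))) +
          ∫ r in t₀..(t₀ + t), matVec (σ' (seg hT x r)) (u r)‖
        ≤ ‖∫ r in t₀..(t₀ + t), (b (seg hT x r) - b (segF τ y (r - t₀)))‖ +
          ‖∫ r in t₀..(t₀ + t), matVec (σ' (seg hT x r)) (u r)‖ := norm_add_le _ _
      _ ≤ L * G t + A := by rw [← h1'] ; exact add_le_add h1 h2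
  have hNle : ∀ t ∈ Icc (0:ℝ) T₁, N t ≤ L * (∫ s in (0:ℝ)..t, N s) + A := by
    intro t ht
    have hGt0 : 0 ≤ G t := intervalIntegral.integral_nonneg ht.1 fun s _ => hN0 s
    have hRHS0 : 0 ≤ L * G t + A := by positivity
    have : ‖seg hT x (t₀ + t) - segF τ y t‖ ≤ L * G t + A := by
      refine (ContinuousMap.norm_le _ hRHS0).2 ?_
      rintro ⟨s, hs1, hs2⟩
      have hval : (seg hT x (t₀ + t) - segF τ y t) ⟨s, hs1, hs2⟩ = w (t + s) := by
        rw [ContinuousMap.sub_apply]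
        have e1 : (seg hT x (t₀ + t)) ⟨s, hs1, hs2⟩
            = x (projIcc (-τ) T hT (t₀ + t + s)) := rfl
        have e2 : (segF τ y t) ⟨s, hs1, hs2⟩ = y (t + s) := rfl
        have e3 : w (t + s) = x (projIcc (-τ) T hT (t₀ + (t + s))) - y (t + s) := rfl
        rw [e1, e2, e3, add_assoc]
      rw [hval]
      by_cases hcase : 0 ≤ t + s
      · have hts : t + s ∈ Icc (0:ℝ) T₁ := ⟨hcase, by linarith [ht.2]⟩
        refine (hwbound _ hts).trans ?_
        have hmono : G (t + s) ≤ G t := by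
          refine intervalIntegral.integral_mono_interval le_rfl hcase (by linarith) ?_
            (hNc.intervalIntegrable _ _)
          filter_upwards with r
          exact hN0 r
        have hmul := mul_le_mul_of_nonneg_left hmono hLpos.le
        linarith
      · push_neg at hcase
        rw [hw_neg (t + s) (by linarith [ht.1, hs1]) hcase.le]
        simpa using hRHS0
    exact this
  have hfinal := gronwall_int hNc hN0 hLpos hA0 hT₁ hNle
  rw [dist_eq_norm]
  exact hfinal

end Window

set_option maxHeartbeats 2000000 in
/-- key step of Lemma 6.5: the energy needed to stay in
`cl(𝐁(𝐃,η₁)) \ 𝐁(𝐎,μ−η₁)` for time `T` tends to `∞` as `T → ∞`, uniformly over initial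
conditions on the sphere `𝐒(𝐎,2μ)`. -/
theorem stmt_14 {d m : ℕ} (hd : 0 < d) (hm : 0 < m) {τ : ℝ} (hτ : 0 < τ)
    (b : Hist τ d → Vec d) (σ' : Hist τ d → Matrix (Fin d) (Fin m) ℝ)
    {κ₁ : ℝ} (hκ₁ : 0 < κ₁) (hlip : LipCoeff b σ' κ₁)
    (xs : C(ℝ, Vec d)) (p : ℝ) (hxs : IsPeriodicSol τ b xs p)
    -- the solution semiflow of the DDE: `sol φ` is the solution with initial condition `φ`
    (sol : Hist τ d → C(ℝ, Vec d))
    (hsol : ∀ φ : Hist τ d, IsDDESol τ b (sol φ) ∧ segF τ (sol φ) 0 = φ)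
    (D : Set (Hist τ d)) (hDopen : IsOpen D) (hDconn : IsConnected D)
    (hDbdd : Bornology.IsBounded D) (hOD : orbit τ xs p ⊆ D)
    (η₀ : ℝ) (hη₀ : 0 < η₀)
    -- `𝐁(𝐃,η₀)` is uniformly attracted to `𝐎`
    (hattr : ∀ δ : ℝ, 0 < δ → ∃ T : ℝ, 0 < T ∧
      ∀ φ : Hist τ d, infDist φ D < η₀ →
        ∀ t : ℝ, T ≤ t → infDist (segF τ (sol φ) t) (orbit τ xs p) ≤ δ)
    (μ η₁ : ℝ) (hμ : 0 < μ) (hη₁ : 0 < η₁) (hη₁μ : η₁ < μ) (hη₁η₀ : η₁ < η₀)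
    (M : ℝ) (hM : 0 < M) :
    ∃ T₀ : ℝ, 0 < T₀ ∧ ∀ T : ℝ, T₀ ≤ T → ∀ hT : -τ ≤ T,
      ENNReal.ofReal M <
        ⨅ (φ : Hist τ d) (_ : infDist φ (orbit τ xs p) = 2 * μ),
          ⨅ (x : Traj τ T d)
            (_ : ∀ t ∈ Icc (0:ℝ) T,
              seg hT x t ∈
                  closure {ψ : Hist τ d | infDist ψ D < η₁} ∧
                ¬ infDist (seg hT x t) (orbit τ xs p) < μ - η₁),
            rateAt hT b σ' φ x := by
  classical
  set O := orbit τ xs p with hO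
  obtain ⟨L, hL⟩ : ∃ L : ℝ, L = Real.sqrt κ₁ := ⟨_, rfl⟩
  have hLpos : 0 < L := hL ▸ Real.sqrt_pos.2 hκ₁
  have hOne : O.Nonempty := ⟨segF τ xs 0, ⟨0, ⟨le_rfl, hxs.2.1⟩, rfl⟩⟩
  have hDne : D.Nonempty := hOne.mono hOD
  obtain ⟨R₀, hR₀⟩ := hDbdd.subset_closedBall 0
  have hR₀0 : 0 ≤ R₀ := by
    obtain ⟨θ, hθ⟩ := hDne
    exact le_trans dist_nonneg (mem_closedBall.1 (hR₀ hθ))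
  obtain ⟨R, hR⟩ : ∃ R : ℝ, R = R₀ + η₁ + 1 := ⟨_, rfl⟩
  have hRpos : 0 < R := by rw [hR]; linarith
  have hbound : ∀ ψ : Hist τ d, infDist ψ D ≤ η₁ → ‖ψ‖ ≤ R := by
    intro ψ hψ
    have h1 : infDist ψ D < η₁ + 1 := lt_of_le_of_lt hψ (by linarith)
    obtain ⟨θ, hθD, hθd⟩ := (infDist_lt_iff hDne).1 h1
    have h2 : dist θ 0 ≤ R₀ := mem_closedBall.1 (hR₀ hθD)
    calc ‖ψ‖ = dist ψ 0 := (dist_zero_right ψ).symm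
      _ ≤ dist ψ θ + dist θ 0 := dist_triangle _ _ _
      _ ≤ R := by rw [hR]; linarith
  obtain ⟨K, hK⟩ : ∃ K : ℝ, K = frobNorm (σ' 0) + L * R + 1 := ⟨_, rfl⟩
  have hfrob0 : 0 ≤ frobNorm (σ' (0 : Hist τ d)) := Real.sqrt_nonneg _
  have hKpos : 0 < K := by
    rw [hK]; linarith [mul_pos hLpos hRpos]
  have hKσ : ∀ ψ : Hist τ d, ‖ψ‖ ≤ R → frobNorm (σ' ψ) ≤ K := by
    intro ψ hψ
    have h1 := sig_bound hκ₁ hlip ψ 0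
    rw [sub_zero] at h1
    have h2 : L * ‖ψ‖ ≤ L * R := mul_le_mul_of_nonneg_left hψ hLpos.le
    rw [hK]; rw [← hL] at h1; linarith
  have hclη : ∀ ψ ∈ closure {ψ : Hist τ d | infDist ψ D < η₁}, infDist ψ D ≤ η₁ := by
    intro ψ hψ
    have hcl : IsClosed {ψ : Hist τ d | infDist ψ D ≤ η₁} :=
      isClosed_le (continuous_infDist_pt D) continuous_const
    exact closure_minimal (fun a (ha : infDist a D < η₁) => ha.le) hcl hψ
  obtain ⟨δ, hδ⟩ : ∃ δ : ℝ, δ = (μ - η₁) / 2 := ⟨_, rfl⟩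
  have hδpos : 0 < δ := by rw [hδ]; linarith
  obtain ⟨T₁, hT₁pos, hA1⟩ := hattr δ hδpos
  obtain ⟨β, hβ⟩ : ∃ β : ℝ, β = δ / Real.exp (L * T₁) := ⟨_, rfl⟩
  have hβpos : 0 < β := hβ ▸ div_pos hδpos (Real.exp_pos _)
  obtain ⟨c, hc⟩ : ∃ c : ℝ, c = β / (K * T₁) := ⟨_, rfl⟩
  have hcpos : 0 < c := hc ▸ div_pos hβpos (mul_pos hKpos hT₁pos)
  obtain ⟨ε₀, hε₀⟩ : ∃ e : ℝ, e = β * c / K := ⟨_, rfl⟩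
  have hε₀pos : 0 < ε₀ := by rw [hε₀]; positivity
  obtain ⟨n, hn⟩ := exists_nat_gt (2 * M / ε₀)
  have hnR : 0 < (n : ℝ) := lt_trans (by positivity) hn
  have hMn : M < n * ε₀ / 2 := by
    have := (div_lt_iff₀ hε₀pos).1 hn
    linarith
  refine ⟨n * T₁, mul_pos hnR hT₁pos, ?_⟩
  intro T hTT hT
  have h0T : (0:ℝ) ≤ T := le_trans (mul_pos hnR hT₁pos).le hTT
  have hlt : ENNReal.ofReal M < ENNReal.ofReal (n * ε₀ / 2) := by
    rw [ENNReal.ofReal_lt_ofReal_iff (div_pos (mul_pos hnR hε₀pos) two_pos)]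
    exact hMn
  refine lt_of_lt_of_le hlt ?_
  refine le_iInf fun φ => le_iInf fun hφO => le_iInf fun x => le_iInf fun hx => ?_
  rw [rateAt]
  split_ifs with h0
  swap
  · exact le_top
  rw [rate]
  refine le_iInf fun u => le_iInf fun hu => ?_
  refine ENNReal.ofReal_le_ofReal ?_
  -- integrability of ‖u‖ and ‖u‖²
  haveI hfin : IsFiniteMeasure (volume.restrict (Icc (0:ℝ) T)) :=
    ⟨by rw [Measure.restrict_apply_univ]; exact measure_Icc_lt_top⟩
  have hu2Int : IntegrableOn (fun s => ‖u s‖ ^ 2) (Icc 0 T) volume := by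
    have h := hu.1.integrable_norm_rpow (by norm_num) (by norm_num)
    have h2 : (fun s => ‖u s‖ ^ (2:ℝ≥0∞).toReal) = fun s => ‖u s‖ ^ 2 := by
      funext s
      rw [show ((2:ℝ≥0∞).toReal) = ((2:ℕ):ℝ) by norm_num, Real.rpow_natCast]
    rwa [h2] at h
  have hu2II : ∀ a e : ℝ, 0 ≤ a → a ≤ e → e ≤ T →
      IntervalIntegrable (fun s => ‖u s‖ ^ 2) volume a e := by
    intro a e ha hae heT
    refine (hu2Int.mono_set ?_).intervalIntegrable
    rw [Set.uIcc_of_le hae]; exact Icc_subset_Icc ha heT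
  have huInt : IntegrableOn (fun s => ‖u s‖) (Icc 0 T) volume := by
    have h1 : MemLp u 1 (volume.restrict (Icc (0:ℝ) T)) :=
      hu.1.mono_exponent (by norm_num)
    exact (memLp_one_iff_integrable.1 h1).norm
  have huII : ∀ a e : ℝ, 0 ≤ a → a ≤ e → e ≤ T →
      IntervalIntegrable (fun s => ‖u s‖) volume a e := by
    intro a e ha hae heT
    refine (huInt.mono_set ?_).intervalIntegrable
    rw [Set.uIcc_of_le hae]; exact Icc_subset_Icc ha heT
  -- σ bound along the path
  have hσK : ∀ s ∈ Icc (0:ℝ) T, frobNorm (σ' (seg hT x s)) ≤ K :=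
    fun s hs => hKσ _ (hbound _ (hclη _ (hx s hs).1))
  -- per-window energy
  have hwindow : ∀ k : ℕ, k < n →
      ε₀ ≤ ∫ s in ((k:ℝ) * T₁)..(((k:ℝ) + 1) * T₁), ‖u s‖ ^ 2 := by
    intro k hk
    rw [show (((k:ℝ) + 1) * T₁) = ((k:ℝ) * T₁ + T₁) by ring]
    set t₀ := (k:ℝ) * T₁ with ht₀def
    have ht₀0 : 0 ≤ t₀ := by positivity
    have hk1 : ((k:ℝ) + 1) ≤ n := by exact_mod_cast Nat.succ_le_of_lt hk
    have hwinT : t₀ + T₁ ≤ T := by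
      have h1 : t₀ + T₁ = ((k:ℝ) + 1) * T₁ := by ring
      have h2 : ((k:ℝ) + 1) * T₁ ≤ n * T₁ :=
        mul_le_mul_of_nonneg_right hk1 hT₁pos.le
      linarith
    have ht₀T : t₀ ≤ T := by linarith
    set φ₀ := seg hT x t₀ with hφ₀
    have hDist : infDist φ₀ D ≤ η₁ := hclη _ (hx t₀ ⟨ht₀0, ht₀T⟩).1
    have hyd := hsol φ₀
    have hclose : infDist (segF τ (sol φ₀) T₁) O ≤ δ :=
      hA1 φ₀ (lt_of_le_of_lt hDist hη₁η₀) T₁ le_rfl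
    have hfar : μ - η₁ ≤ infDist (seg hT x (t₀ + T₁)) O :=
      not_lt.1 (hx (t₀ + T₁) ⟨by linarith, hwinT⟩).2
    have hdist : δ ≤ dist (seg hT x (t₀ + T₁)) (segF τ (sol φ₀) T₁) := by
      have h3 := infDist_le_infDist_add_dist
        (x := seg hT x (t₀ + T₁)) (y := segF τ (sol φ₀) T₁) (s := O)
      rw [hδ]; linarith
    have hwe := window_energy hτ hκ₁ hlip hT x u hu hyd.1 ht₀0 hT₁pos.le hwinT
      hyd.2 hKpos hσK
    rw [← hL] at hwe
    set Iu := ∫ s in t₀..(t₀ + T₁), ‖u s‖ with hIudef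
    have hIu0 : 0 ≤ Iu :=
      intervalIntegral.integral_nonneg (by linarith) fun s _ => norm_nonneg _
    have hβle : β ≤ K * Iu := by
      have h4 : δ ≤ K * Iu * Real.exp (L * T₁) := le_trans hdist hwe
      rw [hβ, div_le_iff₀ (Real.exp_pos _)]
      linarith
    set W := ∫ s in t₀..(t₀ + T₁), ‖u s‖ ^ 2 with hWdef
    have hW0 : 0 ≤ W :=
      intervalIntegral.integral_nonneg (by linarith) fun s _ => sq_nonneg _
    have hIu_le : Iu ≤ c / 2 * T₁ + W / (2 * c) := by
      have hpt : ∀ s ∈ Icc t₀ (t₀ + T₁), ‖u s‖ ≤ c / 2 + ‖u s‖ ^ 2 / (2 * c) := by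
        intro s _
        have h5 : 0 ≤ (‖u s‖ - c) ^ 2 := sq_nonneg _
        rw [← sub_nonneg]
        have heq5 : c / 2 + ‖u s‖ ^ 2 / (2 * c) - ‖u s‖
            = (c * c + ‖u s‖ ^ 2 - 2 * c * ‖u s‖) / (2 * c) := by
          field_simp
        rw [heq5]
        have h5' : (‖u s‖ - c) ^ 2 = ‖u s‖ ^ 2 - 2 * c * ‖u s‖ + c * c := by ring
        refine div_nonneg (by linarith) (by positivity)
      have hint2 : IntervalIntegrable (fun s => c / 2 + ‖u s‖ ^ 2 / (2 * c))
          volume t₀ (t₀ + T₁) := by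
        refine IntervalIntegrable.add (intervalIntegrable_const) ?_
        exact (hu2II t₀ (t₀ + T₁) ht₀0 (by linarith) hwinT).div_const _
      have h6 := intervalIntegral.integral_mono_on (by linarith)
        (huII t₀ (t₀ + T₁) ht₀0 (by linarith) hwinT) hint2 hpt
      rw [intervalIntegral.integral_add (intervalIntegrable_const)
        ((hu2II t₀ (t₀ + T₁) ht₀0 (by linarith) hwinT).div_const _),
        intervalIntegral.integral_const, intervalIntegral.integral_div] at h6
      have h7 : (t₀ + T₁ - t₀) • (c / 2) = c / 2 * T₁ := by
        rw [smul_eq_mul]; ring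
      rw [h7] at h6
      exact h6
    -- conclude ε₀ ≤ W
    have h8 : K * (c / 2 * T₁) = β / 2 := by
      have hKT : K * T₁ ≠ 0 := (mul_pos hKpos hT₁pos).ne'
      rw [hc]
      field_simp
    have h9 : β ≤ β / 2 + K * (W / (2 * c)) := by
      calc β ≤ K * Iu := hβle
        _ ≤ K * (c / 2 * T₁ + W / (2 * c)) :=
          mul_le_mul_of_nonneg_left hIu_le hKpos.le
        _ = β / 2 + K * (W / (2 * c)) := by rw [mul_add, h8]
    rw [hε₀, div_le_iff₀ hKpos]
    have h10 : β / 2 ≤ K * W / (2 * c) := by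
      have h11 : K * (W / (2 * c)) = K * W / (2 * c) := by ring
      linarith [h11 ▸ (by linarith : β / 2 ≤ K * (W / (2 * c)))]
    have h12 : β / 2 * (2 * c) ≤ K * W := by
      have h2c : (0:ℝ) < 2 * c := by positivity
      have h13 := mul_le_mul_of_nonneg_right h10 h2c.le
      have h14 : K * W / (2 * c) * (2 * c) = K * W := by field_simp
      linarith [h14 ▸ h13]
    calc β * c = β / 2 * (2 * c) := by ring
      _ ≤ K * W := h12
      _ = W * K := mul_comm _ _
  -- sum the windows
  have hadj : ∀ k, k < n → IntervalIntegrable (fun s => ‖u s‖ ^ 2) volume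
      ((fun k : ℕ => (k:ℝ) * T₁) k) ((fun k : ℕ => (k:ℝ) * T₁) (k + 1)) := by
    intro k hk
    have hk1 : ((k:ℝ) + 1) ≤ n := by exact_mod_cast Nat.succ_le_of_lt hk
    refine hu2II _ _ (by positivity) ?_ ?_
    · push_cast
      have h := mul_le_mul_of_nonneg_right
        (by linarith : (k:ℝ) ≤ (k:ℝ) + 1) hT₁pos.le
      linarith
    · push_cast
      have h2 := mul_le_mul_of_nonneg_right hk1 hT₁pos.le
      linarith
  have hsumeq := intervalIntegral.sum_integral_adjacent_intervals
    (a := fun k : ℕ => (k:ℝ) * T₁) (μ := volume) (f := fun s => ‖u s‖ ^ 2) hadj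
  have hsum : (n:ℝ) * ε₀ ≤ ∫ s in (0:ℝ)..((n:ℝ) * T₁), ‖u s‖ ^ 2 := by
    have h12 : (n:ℝ) * ε₀ ≤ ∑ k ∈ Finset.range n,
        ∫ s in ((k:ℝ) * T₁)..(((k:ℝ) + 1) * T₁), ‖u s‖ ^ 2 := by
      have h13 : ∑ _k ∈ Finset.range n, ε₀ ≤ ∑ k ∈ Finset.range n,
          ∫ s in ((k:ℝ) * T₁)..(((k:ℝ) + 1) * T₁), ‖u s‖ ^ 2 :=
        Finset.sum_le_sum fun k hk => hwindow k (Finset.mem_range.1 hk)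
      rwa [Finset.sum_const, Finset.card_range, nsmul_eq_mul] at h13
    calc (n:ℝ) * ε₀ ≤ ∑ k ∈ Finset.range n,
        ∫ s in ((k:ℝ) * T₁)..(((k:ℝ) + 1) * T₁), ‖u s‖ ^ 2 := h12
      _ = ∫ s in (0:ℝ)..((n:ℝ) * T₁), ‖u s‖ ^ 2 := by
          have := hsumeq
          push_cast at this
          simpa using this
  have hTmono : ∫ s in (0:ℝ)..((n:ℝ) * T₁), ‖u s‖ ^ 2 ≤ ∫ s in (0:ℝ)..T, ‖u s‖ ^ 2 := by
    refine intervalIntegral.integral_mono_interval le_rfl (by positivity) hTT ?_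
      (hu2II 0 T le_rfl h0T le_rfl)
    filter_upwards with s
    positivity
  have : (n:ℝ) * ε₀ ≤ ∫ s in (0:ℝ)..T, ‖u s‖ ^ 2 := le_trans hsum hTmono
  linarith
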